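/- For every N ≥ 1, every element of the real Lie subalgebra of the 2^N × 2^N complex matrices generated by the set {Complex.I • H0, Complex.I • H1} commutes with the parity operator M. -/

import Mathlib

open Matrix

attribute [local instance] LieRing.ofAssociativeRing

/-- `Z n`: the Pauli-Z operator acting on site `n` of the chain. -/
noncomputable def Zop (N : ℕ) (n : Fin N) : Matrix (Fin N → Bool) (Fin N → Bool) ℂ :=
  Matrix.diagonal fun s => if s n = false then 1 else -1

/-- `X n`: the Pauli-X (bit flip) operator acting on site `n`. -/
noncomputable def Xop (N : ℕ) (n : Fin N) : Matrix (Fin N → Bool) (Fin N → Bool) ℂ :=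
  Matrix.of fun s t => if t = Function.update s n (!(s n)) then 1 else 0

/-- The nearest-neighbour Ising Hamiltonian `H0 = ∑_{n=0}^{N-2} Z_n Z_{n+1}`. -/
noncomputable def IsingH0 (N : ℕ) : Matrix (Fin N → Bool) (Fin N → Bool) ℂ :=
  ∑ n ∈ (Finset.range (N - 1)).attach,
    Zop N ⟨n.1, by have := Finset.mem_range.mp n.2; omega⟩ *
    Zop N ⟨n.1 + 1, by have := Finset.mem_range.mp n.2; omega⟩

/-- The global transverse-field Hamiltonian `H1 = ∑_n X_n`. -/
noncomputable def IsingH1 (N : ℕ) : Matrix (Fin N → Bool) (Fin N → Bool) ℂ :=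
  ∑ n : Fin N, Xop N n

/-- The X-parity operator `M = ∏_n X_n`, the global spin flip. -/
noncomputable def parityM (N : ℕ) : Matrix (Fin N → Bool) (Fin N → Bool) ℂ :=
  Matrix.of fun s t => if t = (fun n => !(s n)) then 1 else 0

/-- The dynamical Lie algebra `𝔏`: the real Lie subalgebra of the `2^N × 2^N` complex
matrices generated by `{i H0, i H1}`. -/
noncomputable def dynLieAlg (N : ℕ) :
    LieSubalgebra ℝ (Matrix (Fin N → Bool) (Fin N → Bool) ℂ) :=
  LieSubalgebra.lieSpan ℝ (Matrix (Fin N → Bool) (Fin N → Bool) ℂ)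
    {Complex.I • IsingH0 N, Complex.I • IsingH1 N}

/-- For every `N ≥ 1`, every element of the dynamical Lie algebra generated by
`{i H0, i H1}` commutes with the parity operator `M`. -/
lemma mul_parity_apply (N : ℕ) (A : Matrix (Fin N → Bool) (Fin N → Bool) ℂ)
    (s t : Fin N → Bool) : (A * parityM N) s t = A s (fun n => !(t n)) := by
  simp only [Matrix.mul_apply, parityM, Matrix.of_apply]
  rw [Finset.sum_eq_single (fun n => !(t n))]
  · simp
  · intro u _ hu
    rw [if_neg, mul_zero]
    intro h; apply hu; funext n; rw [h]; simp
  · intro h; exact absurd (Finset.mem_univ _) h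

lemma parity_mul_apply (N : ℕ) (A : Matrix (Fin N → Bool) (Fin N → Bool) ℂ)
    (s t : Fin N → Bool) : (parityM N * A) s t = A (fun n => !(s n)) t := by
  simp only [Matrix.mul_apply, parityM, Matrix.of_apply, ite_mul, one_mul, zero_mul]
  rw [Finset.sum_ite_eq' Finset.univ (fun n => !(s n)) (fun u => A u t)]
  simp

lemma Zop_mul_Zop_commute (N : ℕ) (a b : Fin N) :
    Zop N a * Zop N b * parityM N = parityM N * (Zop N a * Zop N b) := by
  ext s t
  rw [mul_parity_apply, parity_mul_apply]
  simp only [Zop, Matrix.diagonal_mul_diagonal, Matrix.diagonal_apply]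
  by_cases h : t = fun n => !(s n)
  · have h1 : s = fun n => !(t n) := by funext n; rw [h]; simp
    rw [if_pos h1, if_pos h.symm]
    rcases Bool.dichotomy (s a) with hsa | hsa <;>
      rcases Bool.dichotomy (s b) with hsb | hsb <;> simp only [hsa, hsb] <;> norm_num
  · have h1 : ¬(s = fun n => !(t n)) := fun hc => h (by funext n; rw [hc]; simp)
    have h2 : ¬((fun n => !(s n)) = t) := fun hc => h hc.symm
    rw [if_neg h1, if_neg h2]

lemma Xop_commute (N : ℕ) (n : Fin N) :
    Xop N n * parityM N = parityM N * Xop N n := by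
  ext s t
  rw [mul_parity_apply, parity_mul_apply]
  simp only [Xop, Matrix.of_apply]
  congr 1
  rw [eq_iff_iff]
  constructor
  · intro h
    funext m
    have hm' := congrFun h m
    by_cases hm : m = n
    · subst hm
      simp only [Function.update_self] at hm' ⊢
      cases hs : s m <;> simp_all
    · simp only [Function.update_of_ne hm] at hm' ⊢
      cases hs : s m <;> simp_all
  · intro h
    funext m
    have hm' := congrFun h m
    by_cases hm : m = n
    · subst hm
      simp only [Function.update_self] at hm' ⊢
      cases hs : s m <;> simp_all
    · simp only [Function.update_of_ne hm] at hm' ⊢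
      cases hs : s m <;> simp_all

lemma IsingH0_commute (N : ℕ) :
    IsingH0 N * parityM N = parityM N * IsingH0 N := by
  unfold IsingH0
  rw [Finset.sum_mul, Finset.mul_sum]
  exact Finset.sum_congr rfl fun n _ => Zop_mul_Zop_commute N _ _

lemma IsingH1_commute (N : ℕ) :
    IsingH1 N * parityM N = parityM N * IsingH1 N := by
  unfold IsingH1
  rw [Finset.sum_mul, Finset.mul_sum]
  exact Finset.sum_congr rfl fun n _ => Xop_commute N n

noncomputable def parityCommutant (N : ℕ) :
    LieSubalgebra ℝ (Matrix (Fin N → Bool) (Fin N → Bool) ℂ) where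
  carrier := {A | Commute A (parityM N)}
  add_mem' := fun ha hb => ha.add_left hb
  zero_mem' := Commute.zero_left _
  smul_mem' := by
    intro r a ha
    simp only [Set.mem_setOf_eq] at *
    unfold Commute SemiconjBy at *
    rw [smul_mul_assoc, mul_smul_comm, ha]
  lie_mem' := by
    intro a b ha hb
    simp only [Set.mem_setOf_eq] at *
    rw [Ring.lie_def]
    exact (ha.mul_left hb).sub_left (hb.mul_left ha)

theorem dynLieAlg_commutes_parity (N : ℕ) (hN : 1 ≤ N) :
    ∀ A ∈ dynLieAlg N, A * parityM N = parityM N * A := by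
  intro A hA
  have : dynLieAlg N ≤ parityCommutant N := by
    rw [dynLieAlg, LieSubalgebra.lieSpan_le]
    intro x hx
    rcases hx with h | h <;> subst h <;>
      show Commute _ _ <;> unfold Commute SemiconjBy
    · rw [smul_mul_assoc, mul_smul_comm, IsingH0_commute]
    · rw [smul_mul_assoc, mul_smul_comm, IsingH1_commute]
  exact this hA
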